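/- Let M be a compact metric space with Borel probability measure m, f : M → M Borel measurable, and 0 < α ≤ 1. Then there exists a minimal α-observable statistical attractor: a nonempty compact f-invariant set K with m(B(K)) ≥ α such that no proper nonempty compact f-invariant subset K' ⊊ K satisfies m(B(K')) ≥ α. -/

import Mathlib

open MeasureTheory Filter Metric Set
open scoped Classical ENNReal Topology

/-- Frequency of visits, up to time `n - 1`, of the orbit of `x` to the
`ε`-neighborhood of `K`: `(1/n) · #{0 ≤ j ≤ n−1 : dist(f^j(x), K) < ε}`. -/
noncomputable def visitFreq {M : Type*} [MetricSpace M] (f : M → M) (K : Set M) (ε : ℝ)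
    (x : M) (n : ℕ) : ℝ :=
  (((Finset.range n).filter (fun j => infDist (f^[j] x) K < ε)).card : ℝ) / n

/-- Basin of statistical attraction of `K`. -/
def statBasin {M : Type*} [MetricSpace M] (f : M → M) (K : Set M) : Set M :=
  {x | ∀ ε > 0, Tendsto (fun n => visitFreq f K ε x n) atTop (𝓝 1)}

/-- The auxiliary basin `B_ε(K) = {x : liminf_n (1/n)·#{j < n : dist(f^j(x),K) < ε} > 1 − ε}`. -/
def statBasinEps {M : Type*} [MetricSpace M] (f : M → M) (K : Set M) (ε : ℝ) : Set M :=
  {x | 1 - ε < atTop.liminf (fun n => visitFreq f K ε x n)}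

section Aux

variable {M : Type*} [MetricSpace M] {f : M → M} {K K' : Set M} {ε ε' : ℝ} {x : M}

lemma visitFreq_le_one (f : M → M) (K : Set M) (ε : ℝ) (x : M) (n : ℕ) :
    visitFreq f K ε x n ≤ 1 := by
  unfold visitFreq
  rcases Nat.eq_zero_or_pos n with rfl | hn
  · simp
  · rw [div_le_one (by exact_mod_cast hn)]
    exact_mod_cast (Finset.card_filter_le _ _).trans (by simp)

lemma visitFreq_mono (h : ∀ y, infDist y K < ε → infDist y K' < ε') (n : ℕ) :
    visitFreq f K ε x n ≤ visitFreq f K' ε' x n := by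
  unfold visitFreq
  rcases Nat.eq_zero_or_pos n with rfl | hn
  · simp
  have hcard : (((Finset.range n).filter (fun j => infDist (f^[j] x) K < ε)).card : ℝ) ≤
      (((Finset.range n).filter (fun j => infDist (f^[j] x) K' < ε')).card : ℝ) := by
    exact_mod_cast Finset.card_le_card (fun j hj => by
      simp only [Finset.mem_filter] at hj ⊢
      exact ⟨hj.1, h _ hj.2⟩)
  exact div_le_div_of_nonneg_right hcard (Nat.cast_nonneg n)

lemma tendsto_visitFreq_transfer (h : ∀ y, infDist y K < ε → infDist y K' < ε')
    (ht : Tendsto (fun n => visitFreq f K ε x n) atTop (𝓝 1)) :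
    Tendsto (fun n => visitFreq f K' ε' x n) atTop (𝓝 1) :=
  tendsto_of_tendsto_of_tendsto_of_le_of_le ht tendsto_const_nhds
    (fun n => visitFreq_mono h n) (fun n => visitFreq_le_one f K' ε' x n)

lemma statBasin_mono (hK : K.Nonempty) (hKK' : K ⊆ K') : statBasin f K ⊆ statBasin f K' := by
  intro x hx ε hε
  exact tendsto_visitFreq_transfer
    (fun y hy => lt_of_le_of_lt (infDist_le_infDist_of_subset hKK' hK) hy) (hx ε hε)

lemma measurable_visitFreq [MeasurableSpace M] [BorelSpace M] (hf : Measurable f)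
    (K : Set M) (ε : ℝ) (n : ℕ) : Measurable (fun x => visitFreq f K ε x n) := by
  unfold visitFreq
  apply Measurable.div_const
  have : (fun x => (((Finset.range n).filter (fun j => infDist (f^[j] x) K < ε)).card : ℝ))
      = fun x => ∑ j ∈ Finset.range n, if infDist (f^[j] x) K < ε then (1 : ℝ) else 0 := by
    funext x
    rw [Finset.card_filter]
    push_cast
    rfl
  rw [this]
  apply Finset.measurable_sum
  intro j _
  apply Measurable.ite ?_ measurable_const measurable_const
  exact measurableSet_lt ((continuous_infDist_pt K).measurable.comp (hf.iterate j))
    measurable_const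

lemma measurableSet_statBasin [MeasurableSpace M] [BorelSpace M] (hf : Measurable f)
    (K : Set M) : MeasurableSet (statBasin f K) := by
  have : statBasin f K = ⋂ q : {q : ℚ // 0 < q},
      {x | Tendsto (fun n => visitFreq f K (q : ℝ) x n) atTop (𝓝 1)} := by
    ext x
    simp only [statBasin, mem_setOf_eq, mem_iInter]
    constructor
    · intro h q
      exact h (q : ℝ) (by exact_mod_cast q.2)
    · intro h ε hε
      obtain ⟨q, hq0, hqε⟩ := exists_rat_btwn hε
      have hq0' : (0 : ℚ) < q := by exact_mod_cast hq0
      exact tendsto_visitFreq_transfer (fun y hy => hy.trans hqε) (h ⟨q, hq0'⟩)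
  rw [this]
  exact MeasurableSet.iInter fun q =>
    measurableSet_tendsto (𝓝 1) (fun n => measurable_visitFreq hf K (q : ℝ) n)

end Aux

/-- existence of a minimal `α`-observable statistical attractor: a nonempty
compact `f`-invariant set `K` with `m(B(K)) ≥ α`, no proper nonempty compact
`f`-invariant subset of which has basin of measure `≥ α`. -/
theorem exists_minimal_alpha_obs_statAttractor {M : Type*} [MetricSpace M] [CompactSpace M]
    [MeasurableSpace M] [BorelSpace M] (m : Measure M) [IsProbabilityMeasure m]
    (f : M → M) (hf : Measurable f) (α : ℝ) (hα : 0 < α) (hα1 : α ≤ 1) :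
    ∃ K : Set M, K.Nonempty ∧ IsCompact K ∧ f ⁻¹' K = K ∧
      ENNReal.ofReal α ≤ m (statBasin f K) ∧
      ∀ K' : Set M, K' ⊆ K → K' ≠ K → K'.Nonempty → IsCompact K' → f ⁻¹' K' = K' →
        ¬ ENNReal.ofReal α ≤ m (statBasin f K') := by
  have hMne : Nonempty M := by
    by_contra h
    rw [not_nonempty_iff] at h
    have h1 : m univ = 1 := measure_univ
    rw [(univ_eq_empty_iff).mpr h, measure_empty] at h1
    exact one_ne_zero h1.symm
  set S : Set (Set M) := {K | K.Nonempty ∧ IsCompact K ∧ f ⁻¹' K = K ∧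
    ENNReal.ofReal α ≤ m (statBasin f K)} with hS
  -- univ belongs to S
  have huniv : (univ : Set M) ∈ S := by
    refine ⟨univ_nonempty, isCompact_univ, by simp, ?_⟩
    have hbas : statBasin f (univ : Set M) = univ := by
      refine eq_univ_of_forall fun x => fun ε hε => ?_
      have hev : ∀ n, 1 ≤ n → visitFreq f (univ : Set M) ε x n = 1 := by
        intro n hn
        unfold visitFreq
        have : (Finset.range n).filter (fun j => infDist (f^[j] x) univ < ε)
            = Finset.range n := by
          apply Finset.filter_true_of_mem
          intro j _
          rw [infDist_zero_of_mem (mem_univ _)]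
          exact hε
        rw [this, Finset.card_range, div_self (by exact_mod_cast Nat.one_le_iff_ne_zero.mp hn)]
      exact Tendsto.congr' (eventually_atTop.2 ⟨1, fun n hn => (hev n hn).symm⟩)
        tendsto_const_nhds
    rw [hbas, measure_univ]
    exact ENNReal.ofReal_le_one.mpr hα1
  -- Zorn chain condition
  have Hchain : ∀ c ⊆ S, IsChain (· ⊆ ·) c → c.Nonempty → ∃ lb ∈ S, ∀ s ∈ c, lb ⊆ s := by
    intro c hcS hchain hcne
    haveI : Nonempty c := hcne.to_subtype
    set K := ⋂₀ c with hK
    have hdir : DirectedOn (· ⊇ ·) c := fun x hx y hy => (hchain.total hx hy).elim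
      (fun h => ⟨x, hx, subset_rfl, h⟩) (fun h => ⟨y, hy, h, subset_rfl⟩)
    have hcomp : ∀ t ∈ c, IsCompact t := fun t ht => (hcS ht).2.1
    have hne : ∀ t ∈ c, t.Nonempty := fun t ht => (hcS ht).1
    have hKne : K.Nonempty :=
      IsCompact.nonempty_sInter_of_directed_nonempty_isCompact_isClosed hdir hne hcomp
        (fun t ht => (hcomp t ht).isClosed)
    have hKcl : IsClosed K := isClosed_sInter fun t ht => (hcomp t ht).isClosed
    have hKcomp : IsCompact K := hKcl.isCompact
    have hKinv : f ⁻¹' K = K := by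
      rw [hK, sInter_eq_biInter, preimage_iInter₂]
      exact iInter₂_congr fun t ht => (hcS ht).2.2.1
    -- for every positive δ, some member of the chain is inside the δ-thickening of K
    have hthick : ∀ δ : ℝ, 0 < δ → ∃ t ∈ c, t ⊆ thickening δ K := by
      intro δ hδ
      by_contra hcon
      push_neg at hcon
      have hnon : ∀ t : c, ((t : Set M) ∩ (thickening δ K)ᶜ).Nonempty := by
        intro t
        obtain ⟨y, hy, hy2⟩ := not_subset.mp (hcon t t.2)
        exact ⟨y, hy, hy2⟩
      have hdir' : Directed (· ⊇ ·) (fun t : c => (t : Set M) ∩ (thickening δ K)ᶜ) := by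
        intro i j
        obtain ⟨k, hkc, hki, hkj⟩ := hdir i i.2 j j.2
        exact ⟨⟨k, hkc⟩, inter_subset_inter_left _ hki, inter_subset_inter_left _ hkj⟩
      have hnonempty : (⋂ t : c, ((t : Set M) ∩ (thickening δ K)ᶜ)).Nonempty :=
        IsCompact.nonempty_iInter_of_directed_nonempty_isCompact_isClosed _ hdir' hnon
          (fun t => ((hcomp t t.2).inter_right (isOpen_thickening.isClosed_compl)))
          (fun t => IsClosed.inter (hcomp t t.2).isClosed isOpen_thickening.isClosed_compl)
      obtain ⟨y, hy⟩ := hnonempty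
      simp only [mem_iInter, mem_inter_iff, mem_compl_iff] at hy
      have hyK : y ∈ K := by
        rw [hK, mem_sInter]
        intro t ht
        exact (hy ⟨t, ht⟩).1
      exact (hy (Classical.arbitrary c)).2 (self_subset_thickening hδ K hyK)
    -- choose a sequence of chain members within 1/(k+1)-thickenings
    choose T hTc hTsub using fun k : ℕ => hthick (1 / (k + 1)) (by positivity)
    -- the countable intersection of basins
    have hBsub : (⋂ k : ℕ, statBasin f (T k)) ⊆ statBasin f K := by
      intro x hx ε hε
      simp only [mem_iInter] at hx
      obtain ⟨k, hk⟩ := exists_nat_one_div_lt (show (0 : ℝ) < ε / 2 by linarith)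
      have hδpos : (0 : ℝ) < 1 / (k + 1) := by positivity
      refine tendsto_visitFreq_transfer ?_ (hx k (1 / (k + 1)) hδpos)
      intro y hy
      obtain ⟨z, hzT, hyz⟩ := (infDist_lt_iff (hne _ (hTc k))).mp hy
      obtain ⟨w, hwK, hzw⟩ := mem_thickening_iff.mp (hTsub k hzT)
      calc infDist y K ≤ dist y w := infDist_le_dist_of_mem hwK
        _ ≤ dist y z + dist z w := dist_triangle _ _ _
        _ < 1 / (k + 1) + 1 / (k + 1) := by
            push_cast at hk ⊢; linarith
        _ < ε := by push_cast at hk ⊢; linarith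
    have hBdir : Directed (· ⊇ ·) (fun k : ℕ => statBasin f (T k)) := by
      intro i j
      rcases hchain.total (hTc i) (hTc j) with h | h
      · exact ⟨i, le_refl _, statBasin_mono (hne _ (hTc i)) h⟩
      · exact ⟨j, statBasin_mono (hne _ (hTc j)) h, le_refl _⟩
    have hmeas : m (⋂ k : ℕ, statBasin f (T k)) = ⨅ k : ℕ, m (statBasin f (T k)) :=
      Directed.measure_iInter (fun k => (measurableSet_statBasin hf _).nullMeasurableSet)
        hBdir ⟨0, measure_ne_top m _⟩
    have hKmeas : ENNReal.ofReal α ≤ m (statBasin f K) := by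
      refine le_trans ?_ (measure_mono hBsub)
      rw [hmeas]
      exact le_iInf fun k => (hcS (hTc k)).2.2.2
    exact ⟨K, ⟨hKne, hKcomp, hKinv, hKmeas⟩, fun s hs => sInter_subset_of_mem hs⟩
  obtain ⟨K, -, hKmin⟩ := zorn_superset_nonempty S Hchain univ huniv
  obtain ⟨hKne, hKcomp, hKinv, hKα⟩ := hKmin.prop
  refine ⟨K, hKne, hKcomp, hKinv, hKα, ?_⟩
  intro K' hK'K hK'ne hK'nonempty hK'comp hK'inv hK'α
  exact hK'ne (le_antisymm hK'K (hKmin.2 ⟨hK'nonempty, hK'comp, hK'inv, hK'α⟩ hK'K))
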